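/- Let F(x) = x^d on 𝔽_{2^{2k}} with 0 < d < 2^{2k} − 1, and let 𝒮_F = {α : Tr^{2k}_1(α x^d) is not bent}. If |𝒮_F| = 2^k, then 𝒮_F = 𝔽_{2^k}, the subfield of size 2^k inside 𝔽_{2^{2k}}. -/

import Mathlib

set_option maxHeartbeats 2000000
set_option synthInstance.maxHeartbeats 800000

noncomputable instance (n : ℕ) : Fintype (GaloisField 2 n) := Fintype.ofFinite _

/-- The Walsh–Hadamard transform of `f : 𝔽_{2^n} → 𝔽_2` at `l`. -/
noncomputable def walsh (n : ℕ) (f : GaloisField 2 n → ZMod 2) (l : GaloisField 2 n) : ℤ :=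
  ∑ x : GaloisField 2 n,
    (-1 : ℤ) ^ ((f x + Algebra.trace (ZMod 2) (GaloisField 2 n) (l * x)).val)

/-- `f` is bent on `𝔽_{2^{2k}}`: the Walsh transform takes only the values `±2^k`. -/
def IsBent (k : ℕ) (f : GaloisField 2 (2 * k) → ZMod 2) : Prop :=
  ∀ l : GaloisField 2 (2 * k), walsh (2 * k) f l = 2 ^ k ∨ walsh (2 * k) f l = -(2 ^ k)

noncomputable section
namespace Stmt10Aux
open Finset
open scoped Classical

/-- sign character on ZMod 2 -/
def χ (t : ZMod 2) : ℤ := (-1) ^ t.val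

lemma χ_zero : χ 0 = 1 := rfl
lemma χ_add (a b : ZMod 2) : χ (a + b) = χ a * χ b := by revert a b; decide

variable (k : ℕ)

local notation "E" => GaloisField 2 (2 * k)

def Tr (z : E) : ZMod 2 := Algebra.trace (ZMod 2) (GaloisField 2 (2 * k)) z

lemma Tr_add (a b : E) : Tr k (a + b) = Tr k a + Tr k b := map_add _ _ _
lemma Tr_zero : Tr k 0 = 0 := map_zero _

noncomputable instance : Fintype (E)ˣ := Fintype.ofFinite _

lemma card_E (hk : k ≠ 0) : Fintype.card E = 2 ^ (2 * k) := by
  have := GaloisField.card 2 (2*k) (by omega)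
  simpa [Nat.card_eq_fintype_card] using this

lemma tr_surj : Function.Surjective (Tr k) := Algebra.trace_surjective _ _

/-- character sum over the additive group -/
lemma sum_char (hk : k ≠ 0) (w : E) :
    ∑ x : E, χ (Tr k (w * x)) = if w = 0 then ((2:ℤ) ^ (2 * k)) else 0 := by
  classical
  split_ifs with h
  · subst h
    simp only [zero_mul, Tr_zero, χ_zero, Finset.sum_const, card_univ, nsmul_eq_mul, mul_one]
    rw [card_E k hk]; push_cast; ring
  · obtain ⟨z, hz⟩ := tr_surj k 1
    have hx0 : Tr k (w * (w⁻¹ * z)) = 1 := by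
      rw [← mul_assoc, mul_inv_cancel₀ h, one_mul, hz]
    set x₀ := w⁻¹ * z with hx₀
    have key : ∑ x : E, χ (Tr k (w * x)) = ∑ x : E, χ (Tr k (w * (x₀ + x))) :=
      (Fintype.sum_equiv (Equiv.addLeft x₀) _ _ (fun x => rfl)).symm
    have : ∑ x : E, χ (Tr k (w * (x₀ + x))) = - ∑ x : E, χ (Tr k (w * x)) := by
      rw [← Finset.sum_neg_distrib]
      refine Finset.sum_congr rfl fun x _ => ?_
      rw [mul_add, Tr_add, hx0, χ_add]
      have : χ 1 = -1 := rfl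
      rw [this]; ring
    linarith [key, this]

lemma sq_bij : Function.Bijective (fun x : E => x ^ 2) := by
  have hinj : Function.Injective (fun x : E => x ^ 2) := by
    have := frobenius_inj (GaloisField 2 (2*k)) 2
    intro a b hab
    exact this (by simpa [frobenius_def] using hab)
  exact ⟨hinj, Finite.surjective_of_injective hinj⟩

def frobE : E ≃ₐ[ZMod 2] E :=
  AlgEquiv.ofBijective
    { toFun := fun x => x ^ 2
      map_one' := one_pow 2
      map_mul' := fun x y => mul_pow x y 2
      map_zero' := zero_pow (by norm_num)
      map_add' := fun x y => by
        have h2 : ExpChar (GaloisField 2 (2*k)) 2 := by infer_instance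
        exact add_pow_char x y 2
      commutes' := by
        intro r
        rcases (by decide : ∀ r : ZMod 2, r = 0 ∨ r = 1) r with h | h <;> subst h <;> simp }
    (sq_bij k)

lemma Tr_sq (z : E) : Tr k (z ^ 2) = Tr k z := by
  have := Algebra.trace_eq_of_algEquiv (frobE k) z
  simpa [frobE, Tr] using this

variable (d : ℕ)

def f (α : E) : E → ZMod 2 := fun x => Tr k (α * x ^ d)

lemma walsh_eq (g : E → ZMod 2) (l : E) : walsh (2*k) g l = ∑ x : E, χ (g x + Tr k (l * x)) := rfl

lemma walsh_mul (α c : E) (hc : c ≠ 0) (l : E) :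
    walsh (2*k) (f k d (α * c ^ d)) l = walsh (2*k) (f k d α) (c⁻¹ * l) := by
  rw [walsh_eq, walsh_eq]
  have hbij : Function.Bijective (fun y : E => c⁻¹ * y) :=
    (Equiv.mulLeft₀ c⁻¹ (inv_ne_zero hc)).bijective
  refine (Fintype.sum_bijective _ hbij _ _ fun y => ?_).symm
  simp only [f]
  congr 2
  · congr 1
    field_simp
    try ring
    rw [mul_assoc (α * y ^ d), ← mul_pow, mul_inv_cancel₀ hc, one_pow, mul_one]
  · congr 1
    field_simp
    try ring

lemma bent_mul (α c : E) (hc : c ≠ 0) :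
    IsBent k (f k d (α * c ^ d)) ↔ IsBent k (f k d α) := by
  constructor
  · intro h m
    have := h (c * m)
    rwa [walsh_mul k d α c hc, ← mul_assoc, inv_mul_cancel₀ hc, one_mul] at this
  · intro h l
    rw [walsh_mul k d α c hc]
    exact h _

lemma walsh_frob (α m : E) :
    walsh (2*k) (f k d (α^2)) (m^2) = walsh (2*k) (f k d α) m := by
  rw [walsh_eq, walsh_eq]
  refine (Fintype.sum_bijective _ (sq_bij k) _ _ fun y => ?_).symm
  simp only [f]
  congr 2
  · rw [show α^2 * (y^2)^d = (α * y^d)^2 by ring, Tr_sq]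
  · rw [show m^2 * y^2 = (m*y)^2 by ring, Tr_sq]

lemma bent_frob (α : E) : IsBent k (f k d (α^2)) ↔ IsBent k (f k d α) := by
  constructor
  · intro h m
    rw [← walsh_frob k d α m]
    exact h _
  · intro h l
    obtain ⟨m, rfl⟩ := (sq_bij k).2 l
    rw [walsh_frob k d α m]
    exact h _

lemma parseval (hk : k ≠ 0) (hd : d ≠ 0) (l : E) (hl : l ≠ 0) :
    ∑ α : E, (walsh (2*k) (f k d α) l)^2
      = (1 + (2:ℤ)^(2*k) - ((univ.filter (fun u : E => u ^ d = 1)).card : ℤ))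
          * (2:ℤ)^(2*k) := by
  classical
  set Q : ℤ := (2:ℤ)^(2*k) with hQ
  set U : Finset E := univ.filter (fun u : E => u ^ d = 1) with hU
  set h : E → ℤ := fun x => ∑ y ∈ univ.filter (fun y : E => y^d = x^d), χ (Tr k (l*(x+y)))
    with hh
  have key : ∑ α : E, (walsh (2*k) (f k d α) l)^2 = (∑ x : E, h x) * Q := by
    have step1 : ∀ α : E, (walsh (2*k) (f k d α) l)^2
        = ∑ x : E, ∑ y : E, χ (f k d α x + Tr k (l*x)) * χ (f k d α y + Tr k (l*y)) := by
      intro α; rw [walsh_eq, sq, Finset.sum_mul_sum]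
    rw [Finset.sum_congr rfl (fun α _ => step1 α)]
    rw [Finset.sum_comm]
    rw [Finset.sum_congr rfl (fun (x : E) _ => Finset.sum_comm (γ := E))]
    have inner : ∀ x y : E,
        ∑ α : E, χ (f k d α x + Tr k (l*x)) * χ (f k d α y + Tr k (l*y))
          = if y^d = x^d then χ (Tr k (l*(x+y))) * Q else 0 := by
      intro x y
      have hpt : ∀ α : E, χ (f k d α x + Tr k (l*x)) * χ (f k d α y + Tr k (l*y))
          = χ (Tr k (l*(x+y))) * χ (Tr k ((x^d + y^d) * α)) := by
        intro α
        have h1 : Tr k (l*(x+y)) = Tr k (l*x) + Tr k (l*y) := by rw [mul_add, Tr_add]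
        have h2 : Tr k ((x^d+y^d)*α) = Tr k (α * x^d) + Tr k (α * y^d) := by
          rw [show (x^d+y^d)*α = α*x^d + α*y^d by ring, Tr_add]
        rw [χ_add, χ_add, h1, h2, χ_add, χ_add]
        simp only [f]
        ring
      rw [Finset.sum_congr rfl (fun α _ => hpt α), ← Finset.mul_sum, sum_char k hk,
        mul_ite, mul_zero]
      have hcond : (x^d + y^d = 0) ↔ (y^d = x^d) := by
        rw [CharTwo.add_eq_iff_eq_add, zero_add, eq_comm]
      rw [if_congr hcond rfl rfl]
    rw [Finset.sum_congr rfl fun (x : E) _ =>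
      (Finset.sum_congr rfl fun (y : E) _ => inner x y)]
    rw [Finset.sum_mul]
    refine Finset.sum_congr rfl fun (x : E) _ => ?_
    rw [Finset.sum_ite, Finset.sum_const_zero, add_zero]
    simp only [hh]
    rw [Finset.sum_mul]
  rw [key]
  have h0 : h 0 = 1 := by
    have : (univ.filter (fun y : E => y^d = (0:E)^d)) = {0} := by
      ext y
      simp [zero_pow hd, pow_eq_zero_iff hd]
    simp only [hh, this, Finset.sum_singleton, add_zero, mul_zero, Tr_zero, χ_zero]
  have hsplit : ∑ x : E, h x = h 0 + ∑ x ∈ univ.erase 0, h x :=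
    (Finset.add_sum_erase univ h (mem_univ 0)).symm
  have hx : ∀ x : E, x ≠ 0 → h x = ∑ u ∈ U, χ (Tr k ((l*(1+u))*x)) := by
    intro x hx0
    refine Finset.sum_nbij' (fun y => x⁻¹ * y) (fun u => x * u) ?_ ?_ ?_ ?_ ?_
    · intro y hy
      simp only [mem_filter, mem_univ, true_and] at hy ⊢
      rw [hU, mem_filter]
      refine ⟨mem_univ _, ?_⟩
      rw [mul_pow, hy, inv_pow, inv_mul_cancel₀ (pow_ne_zero d hx0)]
    · intro u hu
      rw [hU, mem_filter] at hu
      simp only [mem_filter, mem_univ, true_and]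
      rw [mul_pow, hu.2, mul_one]
    · intro y _; field_simp
    · intro u _; field_simp
    · intro y hy
      congr 1
      congr 1
      field_simp
      try ring
  have hsum2 : ∑ x ∈ univ.erase 0, h x
      = ∑ u ∈ U, ((if u = 1 then Q else 0) - 1) := by
    rw [Finset.sum_congr rfl fun x hxm => hx x (Finset.ne_of_mem_erase hxm)]
    rw [Finset.sum_comm]
    refine Finset.sum_congr rfl fun u _ => ?_
    rw [Finset.sum_erase_eq_sub (mem_univ (0:E))]
    have hc : ∀ x : E, χ (Tr k ((l*(1+u))*x)) = χ (Tr k ((l*(1+u))*x)) := fun _ => rfl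
    rw [sum_char k hk (l*(1+u))]
    have hcond : (l*(1+u) = 0) ↔ (u = 1) := by
      rw [mul_eq_zero, or_iff_right hl, CharTwo.add_eq_iff_eq_add, zero_add, eq_comm]
    rw [if_congr hcond rfl rfl, mul_zero, Tr_zero, χ_zero]
  have hone : (1:E) ∈ U := by rw [hU, mem_filter]; exact ⟨mem_univ _, one_pow d⟩
  rw [hsplit, h0, hsum2, Finset.sum_sub_distrib, Finset.sum_ite_eq' U (1:E) (fun _ => Q),
    if_pos hone, Finset.sum_const, nsmul_eq_mul, mul_one]
  ring

/-- fiber counting : card of nonzero elts = (card image of pow d) * (card of d-th roots of 1) -/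
lemma count_ND (hk : k ≠ 0) (hd : d ≠ 0) :
    ((univ.erase (0:E)).image (· ^ d)).card * (univ.filter (fun u : E => u ^ d = 1)).card
      = 2 ^ (2*k) - 1 := by
  classical
  have main := Finset.card_eq_sum_card_image (· ^ d) (univ.erase (0:E))
  have hfib : ∀ b ∈ (univ.erase (0:E)).image (· ^ d),
      ((univ.erase (0:E)).filter (fun x => x ^ d = b)).card
        = (univ.filter (fun u : E => u ^ d = 1)).card := by
    intro b hb
    obtain ⟨x₀, hx₀m, rfl⟩ := Finset.mem_image.mp hb
    have hx₀ : x₀ ≠ 0 := Finset.ne_of_mem_erase hx₀m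
    refine Finset.card_nbij' (fun y => x₀⁻¹ * y) (fun u => x₀ * u) ?_ ?_ ?_ ?_
    · intro y hy
      simp only [Finset.mem_coe, mem_filter, mem_erase, mem_univ, true_and, and_true] at hy ⊢
      rw [mul_pow, hy.2, inv_pow, inv_mul_cancel₀ (pow_ne_zero d hx₀)]
    · intro u hu
      simp only [Finset.mem_coe, mem_filter, mem_univ, true_and] at hu
      simp only [Finset.mem_coe, mem_filter, mem_erase, mem_univ, true_and, and_true]
      constructor
      · intro h0
        rcases mul_eq_zero.mp h0 with h | h
        · exact hx₀ h
        · rw [h, zero_pow hd] at hu; exact one_ne_zero hu.symm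
      · rw [mul_pow, hu, mul_one]
    · intro y _; field_simp
    · intro u _; field_simp
  rw [Finset.sum_congr rfl hfib, Finset.sum_const, smul_eq_mul] at main
  rw [← main, Finset.card_erase_of_mem (mem_univ 0), Finset.card_univ, card_E k hk]

/-- Lagrange: if u^d = 1 then u^e = 1 where e is the number of d-th roots of unity -/
lemma lagrange (hd : d ≠ 0) (u : E) (hu : u ^ d = 1) :
    u ^ (univ.filter (fun u : E => u ^ d = 1)).card = 1 := by
  classical
  have hu0 : u ≠ 0 := by
    intro h; rw [h, zero_pow hd] at hu; exact one_ne_zero hu.symm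
  set Uker := MonoidHom.ker (powMonoidHom d : (E)ˣ →* (E)ˣ) with hUker
  have hcard : Fintype.card Uker = (univ.filter (fun u : E => u ^ d = 1)).card := by
    have eqv : Uker ≃ {u : E // u ^ d = 1} := by
      refine ⟨fun g => ⟨((g : (E)ˣ) : E), ?_⟩,
        fun s => ⟨Units.mk0 s.1 ?_, ?_⟩, ?_, ?_⟩
      · have := g.2
        rw [MonoidHom.mem_ker, powMonoidHom_apply] at this
        have := congrArg (fun w : (E)ˣ => (w : E)) this
        simpa only [Units.val_pow_eq_pow_val, Units.val_one] using this
      · intro h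
        have := s.2
        rw [h, zero_pow hd] at this
        exact one_ne_zero this.symm
      · rw [MonoidHom.mem_ker, powMonoidHom_apply]
        ext
        push_cast
        exact s.2
      · intro g; ext; rfl
      · intro s; ext; rfl
    rw [Fintype.card_congr eqv, Fintype.card_subtype]
  rw [← hcard]
  have hmem : Units.mk0 u hu0 ∈ Uker := by
    rw [MonoidHom.mem_ker, powMonoidHom_apply]
    ext; push_cast; exact hu
  have h2 : (⟨Units.mk0 u hu0, hmem⟩ : Uker) ^ Fintype.card Uker = 1 :=
    pow_card_eq_one
  have c1 : ((Units.mk0 u hu0 : (E)ˣ) ^ Fintype.card Uker : (E)ˣ) = 1 := by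
    have := congrArg (fun w : Uker => (w : (E)ˣ)) h2
    simpa only [SubgroupClass.coe_pow, OneMemClass.coe_one] using this
  have c2 := congrArg (fun w : (E)ˣ => (w : E)) c1
  simpa only [Units.val_pow_eq_pow_val, Units.val_mk0, Units.val_one] using c2

/-- number of m-th roots of unity is at most m -/
lemma roots_bound (m : ℕ) (hm : m ≠ 0) :
    (univ.filter (fun u : E => u ^ m = 1)).card ≤ m := by
  classical
  have hsub : (univ.filter (fun u : E => u ^ m = 1))
      ⊆ (Polynomial.nthRoots m (1:E)).toFinset := by
    intro u hu
    rw [mem_filter] at hu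
    rw [Multiset.mem_toFinset, Polynomial.mem_nthRoots (Nat.pos_of_ne_zero hm)]
    exact hu.2
  calc (univ.filter (fun u : E => u ^ m = 1)).card
      ≤ (Polynomial.nthRoots m (1:E)).toFinset.card := Finset.card_le_card hsub
    _ ≤ Multiset.card (Polynomial.nthRoots m (1:E)) := Multiset.toFinset_card_le _
    _ ≤ m := Polynomial.card_nthRoots m 1


end Stmt10Aux
end
open Finset Stmt10Aux

theorem stmt_10 (k d : ℕ) (hd1 : 0 < d) (hd2 : d < 2 ^ (2 * k) - 1)
    (hS : {α : GaloisField 2 (2 * k) |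
        ¬ IsBent k fun x => Algebra.trace (ZMod 2) (GaloisField 2 (2 * k)) (α * x ^ d)}.ncard
      = 2 ^ k) :
    {α : GaloisField 2 (2 * k) |
        ¬ IsBent k fun x => Algebra.trace (ZMod 2) (GaloisField 2 (2 * k)) (α * x ^ d)}
      = {α : GaloisField 2 (2 * k) | α ^ (2 ^ k) = α} := by
  classical
  have hk : k ≠ 0 := by
    rintro rfl
    have : (2:ℕ) ^ (2 * 0) - 1 = 0 := by norm_num
    omega
  have hd : d ≠ 0 := by omega
  set q := 2 ^ k with hq
  have hq2 : 2 ≤ q := by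
    have : (2:ℕ)^1 ≤ 2^k := Nat.pow_le_pow_right (by norm_num) (by omega)
    simpa [hq] using this
  have hqq : (2:ℕ) ^ (2 * k) = q * q := by rw [hq, ← pow_add]; congr 1; omega
  set SF : Finset (GaloisField 2 (2*k)) := univ.filter (fun α => ¬ IsBent k (f k d α))
    with hSF
  have memSF : ∀ α, α ∈ SF ↔ ¬ IsBent k (f k d α) := by
    intro α; rw [hSF, Finset.mem_filter]; simp
  have hsetS : {α : GaloisField 2 (2 * k) |
      ¬ IsBent k fun x => Algebra.trace (ZMod 2) (GaloisField 2 (2 * k)) (α * x ^ d)}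
      = ↑SF := by
    ext α
    rw [Finset.mem_coe, memSF α, Set.mem_setOf_eq]
    exact Iff.rfl
  rw [hsetS] at hS ⊢
  rw [Set.ncard_coe_finset] at hS
  set TF : Finset (GaloisField 2 (2*k)) := univ.filter (fun α => α ^ q = α) with hTF
  have hsetT : {α : GaloisField 2 (2 * k) | α ^ q = α} = ↑TF := by
    ext α
    rw [Finset.mem_coe, hTF, Finset.mem_filter, Set.mem_setOf_eq]
    simp
  rw [hsetT]
  -- 0 is non-bent
  have hexpZ : (2:ℤ) ^ (2*k) = 2^k * 2^k := by rw [← pow_add]; congr 1; omega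
  have h2k : (2:ℤ) ≤ 2 ^ k := by
    have := hq2
    rw [hq] at this
    exact_mod_cast this
  have hw0 : walsh (2*k) (f k d 0) 0 = (2:ℤ) ^ (2*k) := by
    rw [walsh_eq]
    have hterm : ∀ x : GaloisField 2 (2*k), χ (f k d 0 x + Tr k (0 * x)) = 1 := by
      intro x
      simp only [f, zero_mul, Tr_zero, add_zero, χ_zero]
    rw [Finset.sum_congr rfl (fun x _ => hterm x), Finset.sum_const, card_univ, card_E k hk]
    push_cast; ring
  have h0SF : (0 : GaloisField 2 (2*k)) ∈ SF := by
    rw [memSF]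
    intro hB
    have h := hB 0
    rw [hw0, hexpZ] at h
    rcases h with h | h <;> nlinarith [h2k]
  -- definitions
  set U : Finset (GaloisField 2 (2*k)) := univ.filter (fun u => u ^ d = 1) with hU
  set D : Finset (GaloisField 2 (2*k)) := (univ.erase 0).image (· ^ d) with hD
  have hNe : D.card * U.card = 2 ^ (2*k) - 1 := by
    have := count_ND k d hk hd
    rw [← hU, ← hD] at this
    exact this
  -- closure under multiplication by d-th powers
  have hmul : ∀ α ∈ SF, ∀ c : GaloisField 2 (2*k), c ≠ 0 → α * c ^ d ∈ SF := by
    intro α hα c hc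
    rw [memSF] at hα ⊢
    exact fun hB => hα ((bent_mul k d α c hc).mp hB)
  -- pick a nonzero non-bent α₀
  have hcard_erase : (SF.erase 0).card = q - 1 := by
    rw [Finset.card_erase_of_mem h0SF, hS]
  have hne : (SF.erase 0).Nonempty := by
    rw [← Finset.card_pos, hcard_erase]; omega
  obtain ⟨α₀, hα₀e⟩ := hne
  have hα₀SF : α₀ ∈ SF := Finset.mem_of_mem_erase hα₀e
  have hα₀0 : α₀ ≠ 0 := Finset.ne_of_mem_erase hα₀e
  -- the coset α₀ D
  set C : Finset (GaloisField 2 (2*k)) := D.image (fun v => α₀ * v) with hC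
  have hCsub : C ⊆ SF.erase 0 := by
    intro b hb
    rw [hC, Finset.mem_image] at hb
    obtain ⟨v, hv, rfl⟩ := hb
    rw [hD, Finset.mem_image] at hv
    obtain ⟨x, hx, rfl⟩ := hv
    have hx0 : x ≠ 0 := Finset.ne_of_mem_erase hx
    exact Finset.mem_erase.mpr
      ⟨mul_ne_zero hα₀0 (pow_ne_zero d hx0), hmul α₀ hα₀SF x hx0⟩
  have hCcard : C.card = D.card :=
    Finset.card_image_of_injective _ (mul_right_injective₀ hα₀0)
  have hNle : D.card ≤ q - 1 := by
    calc D.card = C.card := hCcard.symm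
      _ ≤ (SF.erase 0).card := Finset.card_le_card hCsub
      _ = q - 1 := hcard_erase
  -- parseval bound : U.card ≤ q + 1
  obtain ⟨l₀, hl₀⟩ := exists_ne (0 : GaloisField 2 (2*k))
  have hpar := parseval k d hk hd l₀ hl₀
  rw [← hU] at hpar
  have hsplit := Finset.sum_filter_add_sum_filter_not univ
    (fun α : GaloisField 2 (2*k) => ¬ IsBent k (f k d α))
    (fun α => (walsh (2*k) (f k d α) l₀)^2)
  rw [← hSF] at hsplit
  have hbentval : ∀ α ∈ univ.filter
      (fun α : GaloisField 2 (2*k) => ¬¬ IsBent k (f k d α)),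
      (walsh (2*k) (f k d α) l₀)^2 = (2:ℤ)^(2*k) := by
    intro α hα
    rw [Finset.mem_filter] at hα
    have hB := not_not.mp hα.2
    rcases hB l₀ with h | h <;> rw [h, hexpZ] <;> ring
  have hcard_bent : (univ.filter
      (fun α : GaloisField 2 (2*k) => ¬¬ IsBent k (f k d α))).card = 2^(2*k) - q := by
    have h2 := Finset.card_filter_add_card_filter_not
      (s := (univ : Finset (GaloisField 2 (2*k))))
      (p := fun α => ¬ IsBent k (f k d α))
    rw [← hSF, card_univ, card_E k hk, hS] at h2
    omega
  have hbent_sum : ∑ α ∈ univ.filter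
      (fun α : GaloisField 2 (2*k) => ¬¬ IsBent k (f k d α)),
      (walsh (2*k) (f k d α) l₀)^2 = ((2^(2*k) - q : ℕ) : ℤ) * (2:ℤ)^(2*k) := by
    rw [Finset.sum_congr rfl hbentval, Finset.sum_const, hcard_bent, nsmul_eq_mul]
  have hnonneg : (0:ℤ) ≤ ∑ α ∈ SF, (walsh (2*k) (f k d α) l₀)^2 :=
    Finset.sum_nonneg fun _ _ => sq_nonneg _
  have hQpos : (0:ℤ) < (2:ℤ)^(2*k) := by positivity
  have hqle : q ≤ 2^(2*k) := by rw [hqq]; nlinarith [hq2]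
  have hEcast : ((2^(2*k) - q : ℕ) : ℤ) = (2:ℤ)^(2*k) - (q:ℤ) := by
    push_cast [hqle]
    ring
  have hecard : (U.card : ℤ) ≤ (q:ℤ) + 1 := by
    rw [hEcast] at hbent_sum
    nlinarith [hpar, hsplit, hbent_sum, hnonneg, hQpos]
  have heUq : U.card ≤ q + 1 := by exact_mod_cast hecard
  -- pin down N and e
  have hNeZ : (D.card : ℤ) * (U.card : ℤ) = (q:ℤ)*(q:ℤ) - 1 := by
    have h1 : (1:ℕ) ≤ 2^(2*k) := Nat.one_le_two_pow
    have h2 : D.card * U.card + 1 = q * q := by omega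
    have h3 := congrArg (Nat.cast (R := ℤ)) h2
    push_cast at h3
    linarith
  have hNcast : (D.card : ℤ) ≤ (q:ℤ) - 1 := by
    have h1 : D.card + 1 ≤ q := by omega
    have h2 : ((D.card + 1 : ℕ) : ℤ) ≤ (q:ℤ) := Nat.cast_le.mpr h1
    push_cast at h2
    linarith
  have hQz2 : (2:ℤ) ≤ (q:ℤ) := by exact_mod_cast hq2
  have hA0 : (0:ℤ) ≤ (D.card : ℤ) := Nat.cast_nonneg _
  have hB0 : (0:ℤ) ≤ (U.card : ℤ) := Nat.cast_nonneg _
  have hAeq : (D.card : ℤ) = (q:ℤ) - 1 := by nlinarith [hNeZ, hNcast, hecard, hQz2, hA0, hB0]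
  have hBeq : (U.card : ℤ) = (q:ℤ) + 1 := by
    have hc : ((q:ℤ) - 1) * (U.card : ℤ) = ((q:ℤ) - 1) * ((q:ℤ) + 1) := by
      rw [← hAeq]; nlinarith [hNeZ, hAeq]
    have hne1 : ((q:ℤ) - 1) ≠ 0 := by omega
    exact mul_left_cancel₀ hne1 hc
  have hNnat : D.card + 1 = q := by exact_mod_cast by push_cast; linarith [hAeq]
  have hUcard : U.card = q + 1 := by exact_mod_cast hBeq
  -- the coset fills all of SF.erase 0
  have hCeq : C = SF.erase 0 :=
    Finset.eq_of_subset_of_card_le hCsub (by rw [hcard_erase, hCcard]; omega)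
  -- α₀ ∈ D
  have hα₀sq : α₀^2 ∈ SF := by
    rw [memSF]
    rw [memSF] at hα₀SF
    exact fun hB => hα₀SF ((bent_frob k d α₀).mp hB)
  have hα₀sq' : α₀^2 ∈ C := by
    rw [hCeq]
    exact Finset.mem_erase.mpr ⟨pow_ne_zero 2 hα₀0, hα₀sq⟩
  have hα₀D : α₀ ∈ D := by
    rw [hC, Finset.mem_image] at hα₀sq'
    obtain ⟨v, hvD, hveq⟩ := hα₀sq'
    have : α₀ * v = α₀ * α₀ := by rw [hveq]; ring
    have hv : v = α₀ := mul_left_cancel₀ hα₀0 this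
    rwa [hv] at hvD
  -- all d-th powers of (q+1)-st roots of unity are 1
  have hUV : ∀ u : GaloisField 2 (2*k), u ^ (q+1) = 1 → u ^ d = 1 := by
    have hUsubV : U ⊆ univ.filter (fun u : GaloisField 2 (2*k) => u ^ (q+1) = 1) := by
      intro u hu
      rw [hU, Finset.mem_filter] at hu
      rw [Finset.mem_filter]
      refine ⟨Finset.mem_univ _, ?_⟩
      have := lagrange k d hd u hu.2
      rw [← hU, hUcard] at this
      exact this
    have hVcard : (univ.filter
        (fun u : GaloisField 2 (2*k) => u ^ (q+1) = 1)).card ≤ q + 1 :=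
      roots_bound k (q+1) (by omega)
    have hUVeq : U = univ.filter (fun u : GaloisField 2 (2*k) => u ^ (q+1) = 1) :=
      Finset.eq_of_subset_of_card_le hUsubV (by rw [hUcard]; exact hVcard)
    intro u hu
    have : u ∈ U := by
      rw [hUVeq, Finset.mem_filter]
      exact ⟨Finset.mem_univ _, hu⟩
    rw [hU, Finset.mem_filter] at this
    exact this.2
  -- elements of D are (q-1)-st roots of unity
  have hDone : ∀ w ∈ D, w ^ (q-1) = 1 := by
    intro w hw
    rw [hD, Finset.mem_image] at hw
    obtain ⟨x, hxm, rfl⟩ := hw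
    have hx0 : x ≠ 0 := Finset.ne_of_mem_erase hxm
    have hcard1 : x ^ (q * q - 1) = 1 := by
      have := FiniteField.pow_card_sub_one_eq_one x hx0
      rwa [card_E k hk, hqq] at this
    have hexp : (q-1)*(q+1) = q*q - 1 := by
      have h1 : q*q = (q-1)*(q+1) + 1 := by
        obtain ⟨q', hq'⟩ := Nat.exists_eq_add_of_le hq2
        rw [hq']
        have h2 : 2 + q' - 1 = q' + 1 := by omega
        rw [h2]
        ring
      exact (Nat.sub_eq_of_eq_add h1).symm
    have hxq : (x ^ (q-1)) ^ (q+1) = 1 := by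
      rw [← pow_mul, hexp]
      exact hcard1
    have hswap : (x^d)^(q-1) = (x^(q-1))^d := pow_right_comm x d (q-1)
    rw [hswap]
    exact hUV _ hxq
  -- SF ⊆ TF
  have hSFsub : SF ⊆ TF := by
    intro β hβ
    rw [hTF, Finset.mem_filter]
    refine ⟨Finset.mem_univ _, ?_⟩
    by_cases hβ0 : β = 0
    · subst hβ0
      rw [zero_pow (by omega : q ≠ 0)]
    · have hβe : β ∈ SF.erase 0 := Finset.mem_erase.mpr ⟨hβ0, hβ⟩
      rw [← hCeq, hC, Finset.mem_image] at hβe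
      obtain ⟨v, hvD2, rfl⟩ := hβe
      have h1 : (α₀ * v)^(q-1) = 1 := by
        rw [mul_pow, hDone α₀ hα₀D, hDone v hvD2, mul_one]
      have h2 : (α₀*v)^q = (α₀*v)^(q-1) * (α₀*v) := by
        rw [← pow_succ]
        congr 1
        omega
      rw [h2, h1, one_mul]
  -- TF is small
  have hTFcard : TF.card ≤ q := by
    have hsub2 : TF ⊆ insert (0 : GaloisField 2 (2*k))
        (univ.filter (fun u : GaloisField 2 (2*k) => u ^ (q-1) = 1)) := by
      intro β hβ
      rw [hTF, Finset.mem_filter] at hβ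
      by_cases hβ0 : β = 0
      · rw [hβ0]; exact Finset.mem_insert_self _ _
      · refine Finset.mem_insert.mpr (Or.inr ?_)
        rw [Finset.mem_filter]
        refine ⟨Finset.mem_univ _, ?_⟩
        have h3 : β^(q-1) * β = 1 * β := by
          rw [one_mul, ← pow_succ]
          have : q - 1 + 1 = q := by omega
          rw [this]
          exact hβ.2
        exact mul_right_cancel₀ hβ0 h3
    calc TF.card ≤ (insert (0 : GaloisField 2 (2*k))
        (univ.filter (fun u : GaloisField 2 (2*k) => u ^ (q-1) = 1))).card :=
          Finset.card_le_card hsub2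
      _ ≤ (univ.filter (fun u : GaloisField 2 (2*k) => u ^ (q-1) = 1)).card + 1 :=
          Finset.card_insert_le _ _
      _ ≤ (q-1) + 1 := by
          have := roots_bound k (q-1) (by omega)
          omega
      _ = q := by omega
  have hfinal : SF = TF :=
    Finset.eq_of_subset_of_card_le hSFsub (by rw [hS]; exact hTFcard)
  exact congrArg (fun s : Finset (GaloisField 2 (2*k)) => (s : Set (GaloisField 2 (2*k)))) hfinal
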